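/- Let 0<λ≤1, f ∈ 𝒰(λ) with f(z)/z subordinate to 1/((1-z)(1-λz)), and let f⁻¹(w)=w+A₂w²+⋯ near 0. Then |A₂| ≤ 1+λ, and this bound is attained by f_λ(z)=z/((1-z)(1-λz)). -/

import Mathlib

open Metric Filter

lemma key (c : ℂ) (u v : ℂ → ℂ) (hv : AnalyticAt ℂ v 0) (hv0 : v 0 = 0)
    (h : ∀ᶠ w in nhds (0:ℂ), u w = w * (1 - v w) * (1 - c * v w)) :
    deriv u 0 = 1 ∧ iteratedDeriv 2 u 0 = -2 * (1 + c) * deriv v 0 := by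
  set D1 : ℂ → ℂ := fun w => (1 - v w) * (1 - c * v w) +
    w * ((-(deriv v w)) * (1 - c * v w) + (1 - v w) * (-(c * deriv v w))) with hD1
  have hva : ∀ᶠ w in nhds (0:ℂ), AnalyticAt ℂ v w := hv.eventually_analyticAt
  have hud : ∀ᶠ w in nhds (0:ℂ), HasDerivAt u (D1 w) w := by
    filter_upwards [h.eventually_nhds, hva] with w hw hvw
    have hv' : HasDerivAt v (deriv v w) w := hvw.differentiableAt.hasDerivAt
    have hR : HasDerivAt (fun w => w * (1 - v w) * (1 - c * v w)) (D1 w) w := by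
      have h1 : HasDerivAt (fun w : ℂ => w * (1 - v w))
          (1 * (1 - v w) + w * (-(deriv v w))) w := by
        have := (hasDerivAt_id w).fun_mul ((hasDerivAt_const w (1:ℂ)).fun_sub hv')
        simpa using this
      have h2 : HasDerivAt (fun w => 1 - c * v w) (-(c * deriv v w)) w := by
        simpa using ((hasDerivAt_const w (1:ℂ)).fun_sub ((hv'.const_mul c)))
      have := h1.fun_mul h2
      refine this.congr_deriv ?_
      rw [hD1]; ring
    exact hR.congr_of_eventuallyEq hw
  have hderiv_eq : deriv u =ᶠ[nhds (0:ℂ)] D1 := by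
    filter_upwards [hud] with w hw using hw.deriv
  have hd0 : deriv u 0 = 1 := by
    have := hud.self_of_nhds
    rw [this.deriv, hD1]
    simp [hv0]
  refine ⟨hd0, ?_⟩
  -- second derivative
  have hv' : HasDerivAt v (deriv v 0) 0 := hv.differentiableAt.hasDerivAt
  have hv'' : HasDerivAt (deriv v) (deriv (deriv v) 0) 0 := by
    obtain ⟨s, hs, hsa⟩ := hv.exists_mem_nhds_analyticOnNhd
    exact ((hsa.deriv 0 (mem_of_mem_nhds hs)).differentiableAt).hasDerivAt
  set S : ℂ → ℂ := fun w => (-(deriv v w)) * (1 - c * v w) + (1 - v w) * (-(c * deriv v w)) with hS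
  have hSd : HasDerivAt S (deriv S 0) 0 := by
    apply DifferentiableAt.hasDerivAt
    apply DifferentiableAt.add
    · exact (hv''.differentiableAt.neg).mul
        ((differentiableAt_const _).sub (hv'.differentiableAt.const_mul c))
    · exact ((differentiableAt_const _).sub hv'.differentiableAt).mul
        (hv''.differentiableAt.const_mul c).neg
  have hD1d : HasDerivAt D1 (-2 * (1 + c) * deriv v 0) 0 := by
    have h1 : HasDerivAt (fun w => (1 - v w) * (1 - c * v w))
        ((-(deriv v 0)) * (1 - c * v 0) + (1 - v 0) * (-(c * deriv v 0))) 0 := by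
      have a1 : HasDerivAt (fun w => 1 - v w) (-(deriv v 0)) 0 := by
        have := (hasDerivAt_const (0:ℂ) (1:ℂ)).fun_sub hv'
        simpa using this
      have a2 : HasDerivAt (fun w => 1 - c * v w) (-(c * deriv v 0)) 0 := by
        simpa using (hasDerivAt_const (0:ℂ) (1:ℂ)).fun_sub (hv'.const_mul c)
      exact a1.mul a2
    have h2 : HasDerivAt (fun w => w * S w) (1 * S 0 + 0 * deriv S 0) 0 :=
      (hasDerivAt_id 0).mul hSd
    have := h1.fun_add h2
    refine this.congr_deriv ?_
    simp only [hS, hv0]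
    ring
  have : deriv (deriv u) 0 = -2 * (1 + c) * deriv v 0 := by
    rw [hderiv_eq.deriv_eq]
    exact hD1d.deriv
  rw [iteratedDeriv_succ, iteratedDeriv_one]
  exact this

lemma conv (c : ℂ) (hc : ‖c‖ ≤ 1) (u v : ℂ → ℂ) (hvc : ContinuousAt v 0) (hv0 : v 0 = 0)
    (h : ∀ᶠ w in nhds (0:ℂ), u w / ((1 - v w) * (1 - c * v w)) = w) :
    ∀ᶠ w in nhds (0:ℂ), u w = w * (1 - v w) * (1 - c * v w) := by
  have hvt : Filter.Tendsto v (nhds 0) (nhds 0) := by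
    have := hvc.tendsto; rwa [hv0] at this
  have hsmall : ∀ᶠ w in nhds (0:ℂ), ‖v w‖ < 1 := by
    have := Metric.tendsto_nhds.mp hvt 1 one_pos
    filter_upwards [this] with w hw
    simpa [dist_eq_norm] using hw
  filter_upwards [h, hsmall] with w hw hs
  have h1 : (1:ℂ) - v w ≠ 0 := by
    intro hz
    have : v w = 1 := by linear_combination -hz
    rw [this] at hs; simp at hs
  have h2 : (1:ℂ) - c * v w ≠ 0 := by
    intro hz
    have : c * v w = 1 := by linear_combination -hz
    have : ‖c * v w‖ = 1 := by rw [this]; simp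
    have hle : ‖c * v w‖ ≤ ‖v w‖ := by
      rw [norm_mul]
      calc ‖c‖ * ‖v w‖ ≤ 1 * ‖v w‖ := by
            exact mul_le_mul_of_nonneg_right hc (norm_nonneg _)
        _ = ‖v w‖ := one_mul _
    linarith
  have := (div_eq_iff (mul_ne_zero h1 h2)).mp hw
  rw [this]; ring

theorem A2_bound (lam : ℝ) (hl0 : 0 < lam) (hl1 : lam ≤ 1)
    (f : ℂ → ℂ)
    (hf : DifferentiableOn ℂ f (ball (0:ℂ) 1))
    (hf0 : f 0 = 0) (hf1 : deriv f 0 = 1)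
    (hU : ∀ z ∈ ball (0:ℂ) 1, z ≠ 0 →
      ‖(z / f z) ^ 2 * deriv f z - 1‖ < lam)
    (ω : ℂ → ℂ)
    (hω : DifferentiableOn ℂ ω (ball (0:ℂ) 1))
    (hω0 : ω 0 = 0)
    (hωb : ∀ z ∈ ball (0:ℂ) 1, ‖ω z‖ < 1)
    (hsub : ∀ z ∈ ball (0:ℂ) 1, f z = z / ((1 - ω z) * (1 - (lam:ℂ) * ω z)))
    (g : ℂ → ℂ)
    (hg : AnalyticAt ℂ g 0) (hg0 : g 0 = 0)
    (hinv : ∀ᶠ w in nhds (0:ℂ), f (g w) = w)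
    (A₂ : ℂ) (hA₂ : A₂ = iteratedDeriv 2 g 0 / 2) :
    ‖A₂‖ ≤ 1 + lam ∧
    (∀ gl : ℂ → ℂ, AnalyticAt ℂ gl 0 → gl 0 = 0 →
      (∀ᶠ w in nhds (0:ℂ), gl w / ((1 - gl w) * (1 - (lam:ℂ) * gl w)) = w) →
      ‖iteratedDeriv 2 gl 0 / 2‖ = 1 + lam) := by
  have hc : ‖((lam:ℂ))‖ ≤ 1 := by
    rw [Complex.norm_real, Real.norm_eq_abs, abs_of_pos hl0]; exact hl1
  have h0mem : (0:ℂ) ∈ ball (0:ℂ) 1 := mem_ball_self one_pos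
  have hωa : AnalyticAt ℂ ω 0 := hω.analyticAt (isOpen_ball.mem_nhds h0mem)
  have hnorm1 : ‖(1:ℂ) + (lam:ℂ)‖ = 1 + lam := by
    have : (1:ℂ) + (lam:ℂ) = ((1 + lam : ℝ) : ℂ) := by push_cast; ring
    rw [this, Complex.norm_real, Real.norm_eq_abs, abs_of_pos (by linarith)]
  constructor
  · -- main bound
    set v : ℂ → ℂ := fun w => ω (g w) with hvdef
    have hωa' : AnalyticAt ℂ ω (g 0) := by rwa [hg0]
    have hv : AnalyticAt ℂ v 0 := hωa'.comp hg
    have hv0 : v 0 = 0 := by simp [hvdef, hg0, hω0]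
    have hgball : ∀ᶠ w in nhds (0:ℂ), g w ∈ ball (0:ℂ) 1 := by
      have : Filter.Tendsto g (nhds 0) (nhds 0) := by
        have := hg.continuousAt.tendsto; rwa [hg0] at this
      exact this (isOpen_ball.mem_nhds h0mem)
    have hdiv : ∀ᶠ w in nhds (0:ℂ), g w / ((1 - v w) * (1 - (lam:ℂ) * v w)) = w := by
      filter_upwards [hinv, hgball] with w h1 h2
      rw [hsub (g w) h2] at h1
      exact h1
    have heq := conv (lam:ℂ) hc g v hv.continuousAt hv0 hdiv
    obtain ⟨hd1, hd2⟩ := key (lam:ℂ) g v hv hv0 heq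
    have hvd : deriv v 0 = deriv ω 0 := by
      have : deriv (ω ∘ g) 0 = deriv ω (g 0) * deriv g 0 :=
        deriv_comp 0 hωa'.differentiableAt hg.differentiableAt
      rw [hd1, hg0, mul_one] at this
      exact this
    have hschwarz : ‖deriv ω 0‖ ≤ 1 := by
      have := Complex.norm_deriv_le_one_of_mapsTo_ball hω
        (fun z hz => by rw [hω0]; simpa [mem_closedBall, dist_eq_norm] using (hωb z hz).le) one_pos
      simpa using this
    rw [hA₂, hd2, hvd]
    have : (-2 * (1 + (lam:ℂ)) * deriv ω 0) / 2 = -((1 + (lam:ℂ)) * deriv ω 0) := by ring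
    rw [this, norm_neg, norm_mul, hnorm1]
    calc (1 + lam) * ‖deriv ω 0‖ ≤ (1 + lam) * 1 :=
          mul_le_mul_of_nonneg_left hschwarz (by linarith)
      _ = 1 + lam := mul_one _
  · intro gl hgl hgl0 hgleq
    have heq := conv (lam:ℂ) hc gl gl hgl.continuousAt hgl0 hgleq
    obtain ⟨hd1, hd2⟩ := key (lam:ℂ) gl gl hgl hgl0 heq
    rw [hd2, hd1]
    have : (-2 * (1 + (lam:ℂ)) * 1) / 2 = -(1 + (lam:ℂ)) := by ring
    rw [this, norm_neg, hnorm1]
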